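/- Let q ≥ 0 be an integer and let r_0, …, r_q ∈ [0,1] and ω_0, …, ω_q ∈ ℝ be nodes and weights such that ∫_0^1 p(x) dx = ∑_{l=0}^q ω_l p(r_l) for every univariate polynomial p of degree ≤ 2q+1. Then for every bivariate polynomial g of total degree ≤ 2q, ∫_{B²} g(x, y) dx dy = ∑_{l=0}^{q} ∑_{m=0}^{2q} g( r_l cos(2πm/(2q+1)), r_l sin(2πm/(2q+1)) ) · ω_l · (2π/(2q+1)) · r_l. -/

import Mathlib

open MeasureTheory Real

set_option maxHeartbeats 1000000 in
private lemma key_exp_aux (q : ℕ) (K : ℤ) (hK : K.natAbs ≤ 2*q) :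
    ∫ θ in (-π:ℝ)..π, Complex.exp (K * θ * Complex.I)
      = (2*π/(2*q+1) : ℝ) * ∑ m : Fin (2*q+1),
          Complex.exp (K * ((2*π*m/(2*q+1) : ℝ)) * Complex.I) := by
  have hNR : (2*(q:ℝ)+1) ≠ 0 := by positivity
  have hNC : (2*(q:ℂ)+1) ≠ 0 := by
    intro h
    have : (2*(q:ℝ)+1 : ℂ) = 0 := by push_cast at h ⊢; exact h
    exact hNR (by exact_mod_cast this)
  rcases eq_or_ne K 0 with rfl | hK0
  · simp only [Int.cast_zero, zero_mul, Complex.exp_zero]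
    rw [intervalIntegral.integral_const]
    simp only [Finset.sum_const, Finset.card_univ, Fintype.card_fin]
    push_cast
    rw [sub_neg_eq_add]
    field_simp
    simp only [Complex.real_smul]; push_cast; ring
  · have hc : ((K:ℂ) * Complex.I) ≠ 0 := by
      simp [Complex.I_ne_zero, Int.cast_ne_zero, hK0]
    have hL : (∫ θ in (-π:ℝ)..π, Complex.exp (K * θ * Complex.I)) = 0 := by
      have : ∀ θ:ℝ, Complex.exp ((K:ℂ) * θ * Complex.I)
          = Complex.exp ((K:ℂ) * Complex.I * θ) := by
        intro θ; congr 1; ring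
      simp_rw [this]
      rw [integral_exp_mul_complex hc]
      have h2 : Complex.exp ((K:ℂ) * Complex.I * (π:ℝ))
          = Complex.exp ((K:ℂ) * Complex.I * ((-π:ℝ):ℂ)) := by
        calc Complex.exp ((K:ℂ) * Complex.I * (π:ℝ))
            = Complex.exp ((K:ℂ) * Complex.I * ((-π:ℝ):ℂ) + (K:ℂ) * (2*(π:ℝ)*Complex.I)) := by
              congr 1; push_cast; ring
          _ = Complex.exp ((K:ℂ) * Complex.I * ((-π:ℝ):ℂ)) := by
              rw [Complex.exp_add, Complex.exp_int_mul_two_pi_mul_I, mul_one]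
      rw [h2, sub_self, zero_div]
    rw [hL]
    set ζ : ℂ := Complex.exp ((2*(π:ℂ)*K/(2*(q:ℂ)+1)) * Complex.I) with hζ
    have hterm : ∀ m : Fin (2*q+1),
        Complex.exp ((K:ℂ) * ((2*π*m/(2*q+1) : ℝ)) * Complex.I) = ζ ^ (m:ℕ) := by
      intro m
      rw [hζ, ← Complex.exp_nat_mul]
      congr 1
      push_cast
      field_simp
    rw [Finset.sum_congr rfl (fun m _ => hterm m)]
    have hζ1 : ζ ≠ 1 := by
      intro h
      rw [hζ, Complex.exp_eq_one_iff] at h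
      obtain ⟨n, hn⟩ := h
      have hπC : ((π:ℝ):ℂ) ≠ 0 := by exact_mod_cast Real.pi_ne_zero
      have hKC : (K:ℂ) = n * (2*(q:ℂ)+1) := by
        field_simp at hn
        have hI := Complex.I_ne_zero
        have h2 : (2*(π:ℂ)*Complex.I) * (K:ℂ)
            = (2*(π:ℂ)*Complex.I) * ((n:ℂ)*(2*(q:ℂ)+1)) := by linear_combination (2*(π:ℂ)*Complex.I) * hn
        exact mul_left_cancel₀ (mul_ne_zero (mul_ne_zero two_ne_zero hπC) hI) h2
      have hKZ : K = n * (2*(q:ℤ)+1) := by exact_mod_cast hKC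
      have hn0 : n ≠ 0 := by
        intro h0; apply hK0; rw [hKZ, h0, zero_mul]
      have : (2*(q:ℤ)+1) ≤ K.natAbs := by
        rw [hKZ]
        calc (2*(q:ℤ)+1) = 1 * (2*(q:ℤ)+1) := by ring
          _ ≤ |n| * |2*(q:ℤ)+1| := by
              apply mul_le_mul
              · exact Int.one_le_abs hn0
              · exact le_abs_self _
              · positivity
              · exact abs_nonneg _
          _ = |n * (2*(q:ℤ)+1)| := (abs_mul _ _).symm
          _ = (n * (2*(q:ℤ)+1)).natAbs := (Int.abs_eq_natAbs _)
      omega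
    rw [Fin.sum_univ_eq_sum_range (fun i => ζ ^ i), geom_sum_eq hζ1]
    have hζN : ζ ^ (2*q+1) = 1 := by
      rw [hζ, ← Complex.exp_nat_mul]
      have : ((2*q+1 : ℕ):ℂ) * (2*(π:ℂ)*K/(2*(q:ℂ)+1) * Complex.I)
          = (K:ℂ) * (2*(π:ℝ) * Complex.I) := by
        push_cast
        field_simp
      rw [this, Complex.exp_int_mul_two_pi_mul_I]
    rw [hζN, sub_self, zero_div, mul_zero]

private lemma expand_trig_aux (a b : ℕ) (θ : ℝ) :
    (((Real.cos θ)^a * (Real.sin θ)^b : ℝ) : ℂ)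
    = ∑ j ∈ Finset.range (a+1), ∑ k ∈ Finset.range (b+1),
        (((a.choose j : ℂ) * (b.choose k) * (-1)^(b-k) * Complex.I^b) / 2^(a+b)) *
        Complex.exp ((((2*(j:ℤ) - a) + ((b:ℤ) - 2*k)) : ℤ) * θ * Complex.I) := by
  have h1 : (Complex.cos (θ:ℂ))^a = (∑ j ∈ Finset.range (a+1),
      (a.choose j : ℂ) * Complex.exp (((2*(j:ℤ) - a) : ℤ) * θ * Complex.I)) / 2^a := by
    rw [Complex.cos, div_pow, add_pow]
    congr 1
    apply Finset.sum_congr rfl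
    intro j hj
    have hj' : j ≤ a := Nat.lt_succ_iff.mp (Finset.mem_range.mp hj)
    rw [← Complex.exp_nat_mul, ← Complex.exp_nat_mul, ← Complex.exp_add, mul_comm]
    congr 2
    push_cast [hj']
    ring
  have hsum : ∑ k ∈ Finset.range (b+1),
        Complex.exp (-(θ:ℂ)*Complex.I)^k * (-Complex.exp ((θ:ℂ)*Complex.I))^(b-k) * (b.choose k : ℂ)
      = ∑ k ∈ Finset.range (b+1),
        (b.choose k : ℂ) * (-1)^(b-k) * Complex.exp ((((b:ℤ) - 2*k) : ℤ) * θ * Complex.I) := by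
    apply Finset.sum_congr rfl
    intro k hk
    have hk' : k ≤ b := Nat.lt_succ_iff.mp (Finset.mem_range.mp hk)
    rw [neg_pow, ← Complex.exp_nat_mul, ← Complex.exp_nat_mul]
    rw [show Complex.exp ((k:ℂ) * (-(θ:ℂ)*Complex.I)) * ((-1)^(b-k) * Complex.exp (((b-k:ℕ):ℂ) * ((θ:ℂ)*Complex.I)))
        = (-1)^(b-k) * (Complex.exp ((k:ℂ) * (-(θ:ℂ)*Complex.I) + ((b-k:ℕ):ℂ) * ((θ:ℂ)*Complex.I))) by
      rw [Complex.exp_add]; ring]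
    rw [show ((k:ℂ) * (-(θ:ℂ)*Complex.I) + ((b-k:ℕ):ℂ) * ((θ:ℂ)*Complex.I))
        = ((((b:ℤ) - 2*k) : ℤ) : ℂ) * θ * Complex.I by push_cast [hk']; ring]
    ring
  have h2 : (Complex.sin (θ:ℂ))^b = (∑ k ∈ Finset.range (b+1),
      (b.choose k : ℂ) * (-1)^(b-k) * Complex.exp ((((b:ℤ) - 2*k) : ℤ) * θ * Complex.I))
      * Complex.I^b / 2^b := by
    rw [Complex.sin, div_pow, mul_pow, sub_eq_add_neg, add_pow, hsum]
  rw [Complex.ofReal_mul, Complex.ofReal_pow, Complex.ofReal_pow, Complex.ofReal_cos,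
    Complex.ofReal_sin, h1, h2, div_mul_div_comm, ← mul_assoc, Finset.sum_mul_sum, ← pow_add]
  rw [Finset.sum_mul, Finset.sum_div]
  refine Finset.sum_congr rfl fun j hj => ?_
  rw [Finset.sum_mul, Finset.sum_div]
  refine Finset.sum_congr rfl fun k hk => ?_
  rw [show ((((2*(j:ℤ) - a) + ((b:ℤ) - 2*k)) : ℤ) : ℂ) * θ * Complex.I
      = (((2*(j:ℤ) - a):ℤ):ℂ) * θ * Complex.I + ((((b:ℤ) - 2*k):ℤ):ℂ) * θ * Complex.I by
    push_cast; ring]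
  rw [Complex.exp_add]
  ring

set_option maxHeartbeats 1000000 in
private lemma trig_quad_aux (q a b : ℕ) (hab : a + b ≤ 2*q) :
    ∫ θ in (-π:ℝ)..π, (Real.cos θ)^a * (Real.sin θ)^b
    = (2*π/(2*q+1)) * ∑ m : Fin (2*q+1),
        (Real.cos (2*π*m/(2*q+1)))^a * (Real.sin (2*π*m/(2*q+1)))^b := by
  apply Complex.ofReal_injective
  rw [← intervalIntegral.integral_ofReal (f := fun θ => (Real.cos θ)^a * (Real.sin θ)^b)]
  have hcont : ∀ (c : ℂ) (K : ℤ), Continuous fun θ:ℝ => c * Complex.exp (K * θ * Complex.I) := by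
    intro c K
    continuity
  calc (∫ θ in (-π:ℝ)..π, (((Real.cos θ)^a * (Real.sin θ)^b : ℝ) : ℂ))
      = ∫ θ in (-π:ℝ)..π, ∑ j ∈ Finset.range (a+1), ∑ k ∈ Finset.range (b+1),
          (((a.choose j : ℂ) * (b.choose k) * (-1)^(b-k) * Complex.I^b) / 2^(a+b)) *
          Complex.exp ((((2*(j:ℤ) - a) + ((b:ℤ) - 2*k)) : ℤ) * θ * Complex.I) := by
        apply intervalIntegral.integral_congr
        intro θ _
        exact expand_trig_aux a b θ
    _ = ∑ j ∈ Finset.range (a+1), ∑ k ∈ Finset.range (b+1),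
          (((a.choose j : ℂ) * (b.choose k) * (-1)^(b-k) * Complex.I^b) / 2^(a+b)) *
          ∫ θ in (-π:ℝ)..π,
            Complex.exp ((((2*(j:ℤ) - a) + ((b:ℤ) - 2*k)) : ℤ) * θ * Complex.I) := by
        rw [intervalIntegral.integral_finset_sum (f := fun j θ => ∑ k ∈ Finset.range (b+1),
            (((a.choose j : ℂ) * (b.choose k) * (-1)^(b-k) * Complex.I^b) / 2^(a+b)) *
            Complex.exp ((((2*(j:ℤ) - a) + ((b:ℤ) - 2*k)) : ℤ) * θ * Complex.I))
          (fun j _ => (continuous_finset_sum _ (fun k _ => hcont _ _)).intervalIntegrable _ _)]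
        apply Finset.sum_congr rfl
        intro j _
        rw [intervalIntegral.integral_finset_sum (f := fun k θ =>
            (((a.choose j : ℂ) * (b.choose k) * (-1)^(b-k) * Complex.I^b) / 2^(a+b)) *
            Complex.exp ((((2*(j:ℤ) - a) + ((b:ℤ) - 2*k)) : ℤ) * θ * Complex.I))
          (fun k _ => (hcont _ _).intervalIntegrable _ _)]
        apply Finset.sum_congr rfl
        intro k _
        exact intervalIntegral.integral_const_mul _ _
    _ = ∑ j ∈ Finset.range (a+1), ∑ k ∈ Finset.range (b+1),
          (((a.choose j : ℂ) * (b.choose k) * (-1)^(b-k) * Complex.I^b) / 2^(a+b)) *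
          ((2*π/(2*q+1) : ℝ) * ∑ m : Fin (2*q+1),
            Complex.exp ((((2*(j:ℤ) - a) + ((b:ℤ) - 2*k)) : ℤ) * ((2*π*m/(2*q+1) : ℝ)) * Complex.I)) := by
        apply Finset.sum_congr rfl
        intro j hj
        apply Finset.sum_congr rfl
        intro k hk
        have hj' : j ≤ a := Nat.lt_succ_iff.mp (Finset.mem_range.mp hj)
        have hk' : k ≤ b := Nat.lt_succ_iff.mp (Finset.mem_range.mp hk)
        congr 1
        apply key_exp_aux
        omega
    _ = ((2*π/(2*q+1) : ℝ) * ∑ m : Fin (2*q+1),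
          (((Real.cos (2*π*m/(2*q+1)))^a * (Real.sin (2*π*m/(2*q+1)))^b : ℝ) : ℂ)) := by
        simp only [expand_trig_aux, Finset.mul_sum]
        conv_rhs => rw [Finset.sum_comm]
        refine Finset.sum_congr rfl fun j _ => ?_
        conv_rhs => rw [Finset.sum_comm]
        refine Finset.sum_congr rfl fun k _ => ?_
        refine Finset.sum_congr rfl fun m _ => ?_
        ring
    _ = _ := by push_cast; ring

private lemma disk_monomial_aux (a b : ℕ) :
    ∫ p in {p : ℝ × ℝ | p.1 ^ 2 + p.2 ^ 2 < 1}, p.1^a * p.2^b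
    = (∫ x in (0:ℝ)..1, x^(a+b+1)) * ∫ θ in (-π:ℝ)..π, (Real.cos θ)^a * (Real.sin θ)^b := by
  have hSopen : IsOpen {p : ℝ × ℝ | p.1 ^ 2 + p.2 ^ 2 < 1} := by
    have : Continuous fun p : ℝ × ℝ => p.1^2 + p.2^2 := by continuity
    exact isOpen_lt this continuous_const
  have h1 : (∫ p in {p : ℝ × ℝ | p.1 ^ 2 + p.2 ^ 2 < 1}, p.1^a * p.2^b)
      = ∫ p : ℝ × ℝ, Set.indicator {p : ℝ × ℝ | p.1 ^ 2 + p.2 ^ 2 < 1}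
          (fun p => p.1^a * p.2^b) p := by
    rw [integral_indicator hSopen.measurableSet]
  rw [h1, ← integral_comp_polarCoord_symm]
  have h2 : ∫ p in polarCoord.target,
      p.1 • Set.indicator {p : ℝ × ℝ | p.1 ^ 2 + p.2 ^ 2 < 1}
        (fun p => p.1^a * p.2^b) (polarCoord.symm p)
      = ∫ p in polarCoord.target,
        Set.indicator {p : ℝ × ℝ | p.1 < 1}
          (fun p => p.1^(a+b+1) * ((Real.cos p.2)^a * (Real.sin p.2)^b)) p := by
    apply setIntegral_congr_fun (polarCoord.open_target.measurableSet)
    intro p hp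
    dsimp only
    have hp1 : 0 < p.1 := hp.1
    rw [polarCoord_symm_apply]
    have hcs : (Real.cos p.2)^2 + (Real.sin p.2)^2 = 1 := by
      rw [add_comm]; exact Real.sin_sq_add_cos_sq p.2
    have hkey : (p.1 * Real.cos p.2)^2 + (p.1 * Real.sin p.2)^2 = p.1^2 := by
      linear_combination (p.1^2) * hcs
    by_cases h : p.1 < 1
    · rw [Set.indicator_of_mem (show p ∈ {p : ℝ × ℝ | p.1 < 1} from h),
        Set.indicator_of_mem (show ((p.1 * Real.cos p.2, p.1 * Real.sin p.2) : ℝ × ℝ)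
          ∈ {p : ℝ × ℝ | p.1^2 + p.2^2 < 1} by
            show (p.1 * Real.cos p.2)^2 + (p.1 * Real.sin p.2)^2 < 1
            rw [hkey]; nlinarith)]
      simp only [smul_eq_mul]
      rw [mul_pow, mul_pow]
      have : p.1^(a+b+1) = p.1 * p.1^a * p.1^b := by ring
      rw [this]; ring
    · rw [Set.indicator_of_notMem (show p ∉ {p : ℝ × ℝ | p.1 < 1} from h),
        Set.indicator_of_notMem (show ((p.1 * Real.cos p.2, p.1 * Real.sin p.2) : ℝ × ℝ)
          ∉ {p : ℝ × ℝ | p.1^2 + p.2^2 < 1} by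
            show ¬ ((p.1 * Real.cos p.2)^2 + (p.1 * Real.sin p.2)^2 < 1)
            push_neg at h ⊢
            rw [hkey]; nlinarith), smul_zero]
  rw [h2, setIntegral_indicator (measurableSet_lt measurable_fst measurable_const)]
  have h3 : polarCoord.target ∩ {p : ℝ × ℝ | p.1 < 1}
      = Set.Ioo (0:ℝ) 1 ×ˢ Set.Ioo (-π) π := by
    ext p
    simp only [polarCoord_target, Set.mem_inter_iff, Set.mem_prod, Set.mem_Ioi, Set.mem_Ioo,
      Set.mem_setOf_eq]
    tauto
  rw [h3]
  rw [MeasureTheory.Measure.volume_eq_prod ℝ ℝ]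
  rw [MeasureTheory.setIntegral_prod_mul (fun x => x^(a+b+1))
    (fun θ => (Real.cos θ)^a * (Real.sin θ)^b)]
  rw [intervalIntegral.integral_of_le (by norm_num : (0:ℝ) ≤ 1),
    intervalIntegral.integral_of_le (by linarith [Real.pi_pos] : (-π:ℝ) ≤ π),
    integral_Ioc_eq_integral_Ioo, integral_Ioc_eq_integral_Ioo]

/-- If `r_0,…,r_q ∈ [0,1]` and `ω_0,…,ω_q` are nodes and weights of a
quadrature rule exact on `[0,1]` for univariate polynomials of degree `≤ 2q+1`, then the
product rule combining it (in the radial variable) with the `(2q+1)`-point trapezoidal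
rule (in the azimuthal variable) integrates exactly every bivariate polynomial of total
degree `≤ 2q` over the unit disk `B²`. -/
theorem disk_quadrature_exact
    (q : ℕ) (r ω : Fin (q + 1) → ℝ)
    (hr : ∀ l, r l ∈ Set.Icc (0 : ℝ) 1)
    (hquad : ∀ p : Polynomial ℝ, p.natDegree ≤ 2 * q + 1 →
      ∫ x in (0 : ℝ)..1, p.eval x = ∑ l : Fin (q + 1), ω l * p.eval (r l)) :
    ∀ g : MvPolynomial (Fin 2) ℝ, g.totalDegree ≤ 2 * q →
      ∫ p in {p : ℝ × ℝ | p.1 ^ 2 + p.2 ^ 2 < 1},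
          MvPolynomial.eval ![p.1, p.2] g
        = ∑ l : Fin (q + 1), ∑ m : Fin (2 * q + 1),
            MvPolynomial.eval
              ![r l * Real.cos (2 * π * m / (2 * q + 1)),
                r l * Real.sin (2 * π * m / (2 * q + 1))] g
              * ω l * (2 * π / (2 * q + 1)) * r l := by
  intro g hg
  -- monomial case
  have mono_case : ∀ a b : ℕ, a + b ≤ 2*q →
      (∫ p in {p : ℝ × ℝ | p.1 ^ 2 + p.2 ^ 2 < 1}, p.1^a * p.2^b)
      = ∑ l : Fin (q+1), ∑ m : Fin (2*q+1),
          (r l * Real.cos (2*π*m/(2*q+1)))^a * (r l * Real.sin (2*π*m/(2*q+1)))^b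
          * ω l * (2*π/(2*q+1)) * r l := by
    intro a b hab
    have hrad := hquad (Polynomial.X^(a+b+1)) (by
      rw [Polynomial.natDegree_X_pow]; omega)
    simp only [Polynomial.eval_pow, Polynomial.eval_X] at hrad
    rw [disk_monomial_aux a b, hrad, trig_quad_aux q a b hab, Finset.sum_mul]
    refine Finset.sum_congr rfl fun l _ => ?_
    simp only [Finset.mul_sum]
    refine Finset.sum_congr rfl fun m _ => ?_
    ring
  -- expand evaluation
  have hg' : ∀ x y : ℝ, MvPolynomial.eval ![x, y] g
      = ∑ v ∈ g.support, MvPolynomial.coeff v g * (x^(v 0) * y^(v 1)) := by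
    intro x y
    conv_lhs => rw [MvPolynomial.as_sum g]
    rw [map_sum]
    refine Finset.sum_congr rfl fun v _ => ?_
    rw [MvPolynomial.eval_monomial]
    rw [Finsupp.prod_fintype _ _ (fun i => pow_zero _), Fin.prod_univ_two]
    simp [Matrix.cons_val_zero, Matrix.cons_val_one]
  have hdeg : ∀ v ∈ g.support, v 0 + v 1 ≤ 2*q := by
    intro v hv
    have h := MvPolynomial.le_totalDegree hv
    rw [Finsupp.sum_fintype _ _ (fun i => rfl), Fin.sum_univ_two] at h
    omega
  have hSopen : IsOpen {p : ℝ × ℝ | p.1 ^ 2 + p.2 ^ 2 < 1} := by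
    have : Continuous fun p : ℝ × ℝ => p.1^2 + p.2^2 := by continuity
    exact isOpen_lt this continuous_const
  have hint : ∀ a b : ℕ, IntegrableOn (fun p : ℝ × ℝ => p.1^a * p.2^b)
      {p : ℝ × ℝ | p.1 ^ 2 + p.2 ^ 2 < 1} := by
    intro a b
    have hc : Continuous fun p : ℝ × ℝ => p.1^a * p.2^b := by continuity
    have hsub : {p : ℝ × ℝ | p.1 ^ 2 + p.2 ^ 2 < 1} ⊆ Metric.closedBall 0 1 := by
      intro p hp
      simp only [Set.mem_setOf_eq] at hp
      rw [Metric.mem_closedBall, dist_zero_right, Prod.norm_def]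
      apply max_le <;> rw [Real.norm_eq_abs, abs_le] <;>
        constructor <;> nlinarith
    exact (hc.continuousOn.integrableOn_compact (isCompact_closedBall 0 1)).mono_set hsub
  calc (∫ p in {p : ℝ × ℝ | p.1 ^ 2 + p.2 ^ 2 < 1}, MvPolynomial.eval ![p.1, p.2] g)
      = ∫ p in {p : ℝ × ℝ | p.1 ^ 2 + p.2 ^ 2 < 1},
          ∑ v ∈ g.support, MvPolynomial.coeff v g * (p.1^(v 0) * p.2^(v 1)) := by
        exact setIntegral_congr_fun hSopen.measurableSet (fun p _ => hg' p.1 p.2)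
    _ = ∑ v ∈ g.support, MvPolynomial.coeff v g *
          ∫ p in {p : ℝ × ℝ | p.1 ^ 2 + p.2 ^ 2 < 1}, p.1^(v 0) * p.2^(v 1) := by
        rw [MeasureTheory.integral_finset_sum _
          (fun v _ => ((hint (v 0) (v 1)).const_mul _))]
        exact Finset.sum_congr rfl fun v _ => integral_const_mul _ _
    _ = ∑ v ∈ g.support, MvPolynomial.coeff v g *
          (∑ l : Fin (q+1), ∑ m : Fin (2*q+1),
            (r l * Real.cos (2*π*m/(2*q+1)))^(v 0) * (r l * Real.sin (2*π*m/(2*q+1)))^(v 1)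
            * ω l * (2*π/(2*q+1)) * r l) := by
        exact Finset.sum_congr rfl fun v hv => by rw [mono_case _ _ (hdeg v hv)]
    _ = _ := by
        simp only [hg', Finset.sum_mul, Finset.mul_sum]
        conv_lhs => rw [Finset.sum_comm]
        refine Finset.sum_congr rfl fun l _ => ?_
        conv_lhs => rw [Finset.sum_comm]
        refine Finset.sum_congr rfl fun m _ => ?_
        refine Finset.sum_congr rfl fun v _ => ?_
        ring
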